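/- Let A be a finite group, C and C' subgroups of A, and φ : C ≃* C' an isomorphism. Then the HNN extension HNNExtension A C C' φ is virtually free: it has a subgroup of finite index which is a free group. -/

import Mathlib

/-!
STATEMENT 14: Let `A` be a finite group, `C` and `C'` subgroups of `A` and `φ : C ≃* C'`
an isomorphism.  Then the HNN extension `HNNExtension A C C' φ` is virtually free: it
has a finite-index subgroup which is a free group.
-/

open HNNExtension

section Perm

variable {A : Type} [Group A] [Finite A] (C C' : Subgroup A) (φ : C ≃* C')

private lemma rc_out_rel (C : Subgroup A) (a : A) :
    a * (Quotient.mk (QuotientGroup.rightRel C) a).out⁻¹ ∈ C := by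
  have h : Quotient.mk (QuotientGroup.rightRel C)
      (Quotient.mk (QuotientGroup.rightRel C) a).out =
      Quotient.mk (QuotientGroup.rightRel C) a := Quotient.out_eq _
  have h2 : QuotientGroup.rightRel C (Quotient.mk (QuotientGroup.rightRel C) a).out a :=
    Quotient.exact h
  exact (QuotientGroup.rightRel_apply).mp h2

private lemma rc_mk_mul (C : Subgroup A) (c : C) (a : A) :
    Quotient.mk (QuotientGroup.rightRel C) ((c : A) * a) =
      Quotient.mk (QuotientGroup.rightRel C) a := by
  exact Quotient.sound ((QuotientGroup.rightRel_apply).mpr (by simpa using c.2))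

/-- Right-coset space based equivariant decomposition. -/
private noncomputable def rcEquiv (C : Subgroup A) :
    C × Quotient (QuotientGroup.rightRel C) ≃ A where
  toFun p := (p.1 : A) * p.2.out
  invFun a := (⟨a * (Quotient.mk (QuotientGroup.rightRel C) a).out⁻¹, rc_out_rel C a⟩,
      Quotient.mk (QuotientGroup.rightRel C) a)
  left_inv := by
    rintro ⟨c, q⟩
    have hq : Quotient.mk (QuotientGroup.rightRel C) ((c : A) * q.out) = q := by
      rw [rc_mk_mul, Quotient.out_eq]
    ext
    · simp [hq]
    · simpa using hq
  right_inv := fun a => by simp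

private theorem exists_perm : ∃ σ : Equiv.Perm A, ∀ (c : C) (x : A),
    σ ((c : A) * x) = (φ c : A) * σ x := by
  classical
  have hcard : Nat.card (Quotient (QuotientGroup.rightRel C)) =
      Nat.card (Quotient (QuotientGroup.rightRel C')) := by
    have h1 : Nat.card C * Nat.card (Quotient (QuotientGroup.rightRel C)) = Nat.card A := by
      rw [← Nat.card_prod]; exact Nat.card_congr (rcEquiv C)
    have h2 : Nat.card C' * Nat.card (Quotient (QuotientGroup.rightRel C')) = Nat.card A := by
      rw [← Nat.card_prod]; exact Nat.card_congr (rcEquiv C')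
    have hcc : Nat.card C = Nat.card C' := Nat.card_congr φ.toEquiv
    have hpos : Nat.card C ≠ 0 := Nat.card_pos.ne'
    rw [hcc] at h1 hpos
    exact Nat.eq_of_mul_eq_mul_left (Nat.pos_of_ne_zero hpos) (h1.trans h2.symm)
  obtain ⟨β⟩ := Finite.card_eq.mp hcard
  refine ⟨(rcEquiv C).symm.trans ((φ.toEquiv.prodCongr β).trans (rcEquiv C')), ?_⟩
  intro c x
  obtain ⟨⟨c₀, q⟩, rfl⟩ := (rcEquiv C).surjective x
  have h1 : (c : A) * (rcEquiv C) (c₀, q) = (rcEquiv C) (c * c₀, q) := by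
    simp [rcEquiv, mul_assoc]
  rw [h1]
  have h2 : ∀ (d : C) (q : Quotient (QuotientGroup.rightRel C)),
      (rcEquiv C).symm ((rcEquiv C) (d, q)) = (d, q) := fun d q => (rcEquiv C).left_inv _
  simp only [Equiv.trans_apply, h2, Equiv.prodCongr_apply, Prod.map]
  simp [rcEquiv, map_mul, mul_assoc]

end Perm

set_option linter.unusedSectionVars false

open HNNExtension CategoryTheory CategoryTheory.ActionCategory IsFreeGroupoid Quiver

section Orbit

variable {G : Type} [Group G] (N : Subgroup G) {H : Type} [Group H] (ι : H →* G)

/-- The orbit setoid on `G ⧸ N` of the subgroup `ι.range`. -/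
def orbSetoid : Setoid (G ⧸ N) where
  r v w := ∃ h : H, ι h • v = w
  iseqv := by
    refine ⟨fun v => ⟨1, by simp⟩, ?_, ?_⟩
    · rintro v w ⟨h, rfl⟩
      exact ⟨h⁻¹, by simp [map_inv]⟩
    · rintro u v w ⟨h, rfl⟩ ⟨h', rfl⟩
      exact ⟨h' * h, by simp [map_mul, mul_smul]⟩

/-- A choice of representative of each `ι.range`-orbit on `G ⧸ N`. -/
noncomputable def orbRep (v : G ⧸ N) : G ⧸ N := (Quotient.mk (orbSetoid N ι) v).out

lemma orbRep_exists (v : G ⧸ N) : ∃ h : H, ι h • orbRep N ι v = v :=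
  (Quotient.exact (Quotient.out_eq (Quotient.mk (orbSetoid N ι) v)) :
    orbSetoid N ι (orbRep N ι v) v)

/-- A choice of group element carrying the orbit representative to the given point. -/
noncomputable def orbSel (v : G ⧸ N) : H := (orbRep_exists N ι v).choose

lemma orbSel_spec (v : G ⧸ N) : ι (orbSel N ι v) • orbRep N ι v = v :=
  (orbRep_exists N ι v).choose_spec

lemma orbRep_smul (h : H) (v : G ⧸ N) : orbRep N ι (ι h • v) = orbRep N ι v := by
  unfold orbRep
  congr 1
  exact (Quotient.sound (⟨h, rfl⟩ : orbSetoid N ι v (ι h • v))).symm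

lemma orbRep_idem (v : G ⧸ N) : orbRep N ι (orbRep N ι v) = orbRep N ι v := by
  obtain ⟨h, hh⟩ := orbRep_exists N ι v
  have h2 := orbRep_smul N ι h (orbRep N ι v)
  rw [hh] at h2
  exact h2.symm

section Free

variable (hfree : ∀ (h : H) (v : G ⧸ N), ι h • v = v → h = 1)
include hfree

lemma orbSel_unique (h : H) (v : G ⧸ N) (hh : ι h • orbRep N ι v = v) :
    h = orbSel N ι v := by
  have h2 := orbSel_spec N ι v
  have : ι ((orbSel N ι v)⁻¹ * h) • orbRep N ι v = orbRep N ι v := by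
    rw [map_mul, mul_smul, hh, map_inv, inv_smul_eq_iff, h2]
  have h3 := hfree _ _ this
  rwa [inv_mul_eq_one, eq_comm] at h3

lemma orbSel_rep (v : G ⧸ N) : orbSel N ι (orbRep N ι v) = 1 :=
  (orbSel_unique N ι hfree 1 (orbRep N ι v) (by rw [map_one, one_smul, orbRep_idem])).symm

lemma orbSel_smul (h : H) (v : G ⧸ N) :
    orbSel N ι (ι h • v) = h * orbSel N ι v := by
  refine (orbSel_unique N ι hfree _ _ ?_).symm
  rw [orbRep_smul, map_mul, mul_smul, orbSel_spec]

lemma orbRep_eq_self_of_sel (v : G ⧸ N) (h : orbSel N ι v = 1) : orbRep N ι v = v := by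
  have := orbSel_spec N ι v
  rwa [h, map_one, one_smul] at this

lemma orbSel_eq_one_of_rep (v : G ⧸ N) (h : orbRep N ι v = v) : orbSel N ι v = 1 := by
  have := orbSel_rep N ι hfree v
  rwa [h] at this

end Free

end Orbit

section HNNGroupoid

open CategoryTheory CategoryTheory.ActionCategory HNNExtension

variable {A : Type} [Group A] {C C' : Subgroup A} {φ : C ≃* C'}

/-- The inclusion of `C` into the HNN extension. -/
def iotaC : C →* HNNExtension A C C' φ := HNNExtension.of.comp C.subtype

variable (N : Subgroup (HNNExtension A C C' φ))

/-- The action groupoid of the HNN extension on the cosets of `N`. -/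
abbrev HGpd : Type :=
  ActionCategory (HNNExtension A C C' φ) (HNNExtension A C C' φ ⧸ N)

/-- Generating quiver for the action groupoid: star arrows within each `A`-orbit,
together with one `t`-arrow per `C`-orbit. -/
abbrev GenHom (x y : HGpd N) : Type :=
  {a : A // orbRep N (HNNExtension.of (φ := φ)) x.back = x.back ∧
      HNNExtension.of (φ := φ) a • x.back = y.back ∧ a ≠ 1} ⊕
  PLift (orbRep N (iotaC (φ := φ)) x.back = x.back ∧
      (HNNExtension.t : HNNExtension A C C' φ) • x.back = y.back)

/-- The morphism of the groupoid determined by a generator. -/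
def genOf {x y : HGpd N} : GenHom N x y → (x ⟶ y)
  | Sum.inl a => ⟨HNNExtension.of (φ := φ) a.1, a.2.2.1⟩
  | Sum.inr h => ⟨HNNExtension.t, h.down.2⟩

open scoped Classical

section Label

variable {X : Type} [Group X] (f : ∀ (x y : HGpd N), GenHom N x y → X)

/-- The label of the star arrow ending at `v` (`1` when `v` is an orbit representative). -/
noncomputable def sfun (v : HNNExtension A C C' φ ⧸ N) : X :=
  if h : orbSel N (HNNExtension.of (φ := φ)) v = 1 then 1
  else f (↑(orbRep N (HNNExtension.of (φ := φ)) v)) (↑v)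
    (Sum.inl ⟨orbSel N (HNNExtension.of (φ := φ)) v,
      by exact orbRep_idem _ _ _,
      by exact orbSel_spec _ _ _, h⟩)

/-- Value on an `A`-arrow with target `v`. -/
noncomputable def alphaFun (a : A) (v : HNNExtension A C C' φ ⧸ N) : X :=
  sfun N f v * (sfun N f ((HNNExtension.of (φ := φ) a)⁻¹ • v))⁻¹

/-- The homomorphism `A →* (V → X) ⋊ G` underlying the lift. -/
noncomputable def FAhom :
    A →* ((HNNExtension A C C' φ ⧸ N) → X) ⋊[mulAutArrow] HNNExtension A C C' φ where
  toFun a := ⟨alphaFun N f a, HNNExtension.of a⟩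
  map_one' := by
    ext v
    · show alphaFun N f 1 v = 1
      simp [alphaFun]
    · show HNNExtension.of (1 : A) = 1
      simp
  map_mul' a b := by
    ext v
    · show alphaFun N f (a * b) v =
        alphaFun N f a v * alphaFun N f b ((HNNExtension.of (φ := φ) a)⁻¹ • v)
      simp only [alphaFun, map_mul, mul_inv_rev, mul_smul]
      group
    · show HNNExtension.of (a * b) = HNNExtension.of a * HNNExtension.of b
      simp

/-- The label of the `t`-arrow starting at `v` (`1` when `v` is not a `C`-orbit rep). -/
noncomputable def gfun (v : HNNExtension A C C' φ ⧸ N) : X :=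
  if h : orbRep N (iotaC (φ := φ)) v = v then
    f (↑v) (↑((HNNExtension.t : HNNExtension A C C' φ) • v))
      (Sum.inr ⟨⟨by exact h, by exact rfl⟩⟩)
  else 1

/-- Value on the `t`-arrow with target `v`. -/
noncomputable def taufun (v : HNNExtension A C C' φ ⧸ N) : X :=
  alphaFun N f (↑(φ (orbSel N (iotaC (φ := φ))
      ((HNNExtension.t : HNNExtension A C C' φ)⁻¹ • v)))) v *
    gfun N f (orbRep N (iotaC (φ := φ)) ((HNNExtension.t : HNNExtension A C C' φ)⁻¹ • v)) *
    (alphaFun N f (↑(orbSel N (iotaC (φ := φ))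
      ((HNNExtension.t : HNNExtension A C C' φ)⁻¹ • v)))
      ((HNNExtension.t : HNNExtension A C C' φ)⁻¹ • v))⁻¹

/-- The image of `t` in the semidirect product. -/
noncomputable def tauEl :
    ((HNNExtension A C C' φ ⧸ N) → X) ⋊[mulAutArrow] HNNExtension A C C' φ :=
  ⟨taufun N f, HNNExtension.t⟩

lemma iotaC_apply (c : C) : (iotaC (φ := φ) c : HNNExtension A C C' φ) = HNNExtension.of (c : A) := rfl

section Rel

variable (hfree : ∀ (a : A) (v : HNNExtension A C C' φ ⧸ N),
    HNNExtension.of (φ := φ) a • v = v → a = 1)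
include hfree

lemma hfreeC : ∀ (c : C) (v : HNNExtension A C C' φ ⧸ N),
    iotaC (φ := φ) c • v = v → c = 1 := by
  intro c v h
  have := hfree (c : A) v h
  exact_mod_cast Subtype.ext this

lemma tau_rel (c : C) :
    tauEl N f * FAhom N f (c : A) = FAhom N f ((φ c : C') : A) * tauEl N f := by
  have hfC := hfreeC N hfree
  ext v
  swap
  · show HNNExtension.t * HNNExtension.of (c : A) = HNNExtension.of ((φ c : C') : A) * HNNExtension.t
    exact HNNExtension.t_mul_of c
  show taufun N f v * alphaFun N f (c : A) ((HNNExtension.t : HNNExtension A C C' φ)⁻¹ • v) =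
    alphaFun N f ((φ c : C') : A) v *
      taufun N f ((HNNExtension.of (φ := φ) ((φ c : C') : A))⁻¹ • v)
  set t' : HNNExtension A C C' φ := HNNExtension.t with ht'
  set u : HNNExtension A C C' φ ⧸ N := t'⁻¹ • v with hu
  set v₂ : HNNExtension A C C' φ ⧸ N := (HNNExtension.of (φ := φ) ((φ c : C') : A))⁻¹ • v with hv₂
  have hu' : t'⁻¹ • v₂ = (HNNExtension.of (φ := φ) ((c : C) : A))⁻¹ • u := by
    rw [hv₂, hu, ← mul_smul, ← mul_smul, ← mul_inv_rev, ← mul_inv_rev,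
      ← HNNExtension.t_mul_of c]
  set c₁ : C := orbSel N (iotaC (φ := φ)) u with hc₁
  set w : HNNExtension A C C' φ ⧸ N := orbRep N (iotaC (φ := φ)) u with hw
  have hw_spec : iotaC (φ := φ) c₁ • w = u := orbSel_spec N _ u
  have hrep' : orbRep N (iotaC (φ := φ)) (t'⁻¹ • v₂) = w := by
    rw [hu']
    have : (HNNExtension.of (φ := φ) ((c : C) : A))⁻¹ = iotaC (φ := φ) c⁻¹ := by
      rw [iotaC_apply]; simp
    rw [this, orbRep_smul, hw]
  have hsel' : orbSel N (iotaC (φ := φ)) (t'⁻¹ • v₂) = c⁻¹ * c₁ := by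
    rw [hu']
    have : (HNNExtension.of (φ := φ) ((c : C) : A))⁻¹ = iotaC (φ := φ) c⁻¹ := by
      rw [iotaC_apply]; simp
    rw [this, orbSel_smul N _ hfC, hc₁]
  have e1 : (HNNExtension.of (φ := φ) ((c₁ : C) : A))⁻¹ • u = w := by
    rw [← hw_spec, iotaC_apply]; simp
  have e2 : (HNNExtension.of (φ := φ) (((c⁻¹ * c₁ : C) : C) : A))⁻¹ • (t'⁻¹ • v₂) = w := by
    rw [hu', ← mul_smul, ← mul_inv_rev, ← map_mul]
    have : ((c : C) : A) * ((c⁻¹ * c₁ : C) : A) = ((c₁ : C) : A) := by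
      push_cast; group
    rw [this, e1]
  have e3 : (HNNExtension.of (φ := φ) ((φ (c⁻¹ * c₁) : C') : A))⁻¹ • v₂ =
      (HNNExtension.of (φ := φ) ((φ c₁ : C') : A))⁻¹ • v := by
    rw [hv₂, ← mul_smul, ← mul_inv_rev, ← map_mul]
    have : ((φ c : C') : A) * ((φ (c⁻¹ * c₁) : C') : A) = ((φ c₁ : C') : A) := by
      rw [← Subgroup.coe_mul, ← map_mul]
      congr 1
      group
    rw [this]
  simp only [taufun, alphaFun, hrep', hsel', ← hu, ← hv₂, ← ht', e1, e2, e3]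
  rw [hu']
  simp only [← hc₁, ← hw, e1]
  group

/-- The lifted homomorphism out of the HNN extension. -/
noncomputable def Fhom : HNNExtension A C C' φ →*
    ((HNNExtension A C C' φ ⧸ N) → X) ⋊[mulAutArrow] HNNExtension A C C' φ :=
  HNNExtension.lift (FAhom N f) (tauEl N f) (fun c => tau_rel N f hfree c)

lemma Fhom_of (a : A) : Fhom N f hfree (HNNExtension.of a) = FAhom N f a :=
  HNNExtension.lift_of _ _ _ a

lemma Fhom_t : Fhom N f hfree (HNNExtension.t) = tauEl N f :=
  HNNExtension.lift_t _ _ _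

lemma Fhom_sane : ∀ g, (Fhom N f hfree g).right = g := by
  intro g
  have : SemidirectProduct.rightHom.comp (Fhom N f hfree) = MonoidHom.id _ := by
    apply HNNExtension.hom_ext
    · ext a
      simp [Fhom_of N f hfree, FAhom, SemidirectProduct.rightHom]
    · show SemidirectProduct.rightHom (Fhom N f hfree HNNExtension.t) = HNNExtension.t
      rw [Fhom_t]
      rfl
  exact DFunLike.ext_iff.mp this g

end Rel

end Label

/-- Objects of the action groupoid with equal base points are equal. -/
lemma obj_ext {x y : HGpd N} (h : x.back = y.back) : x = y := by
  rw [← ActionCategory.back_coe x, ← ActionCategory.back_coe y]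
  exact congrArg _ h

/-- Functors to a group send morphisms with equal data to equal values. -/
lemma Emap_congr {X : Type} [Group X] (E : HGpd N ⥤ CategoryTheory.SingleObj X)
    {x y x' y' : HGpd N} (hx : x = x') (hy : y = y') (m : x ⟶ y) (m' : x' ⟶ y')
    (hval : m.val = m'.val) : E.map m = E.map m' := by
  subst hx; subst hy
  have : m = m' := Subtype.ext hval
  rw [this]

/-- The data underlying a generator. -/
def genData {x y : HGpd N} : GenHom N x y → A ⊕ Unit :=
  Sum.map Subtype.val (fun _ => ())

lemma label_congr {X : Type} [Group X] (f : ∀ (x y : HGpd N), GenHom N x y → X)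
    {x x' y y' : HGpd N} (hx : x = x') (hy : y = y')
    (g : GenHom N x y) (g' : GenHom N x' y') (h : genData N g = genData N g') :
    f x y g = f x' y' g' := by
  subst hx; subst hy
  congr 1
  cases g with
  | inl a =>
    cases g' with
    | inl a' =>
      simp only [genData, Sum.map_inl, Sum.inl.injEq, Function.comp] at h
      exact congrArg Sum.inl (Subtype.ext h)
    | inr b' => simp [genData] at h
  | inr b =>
    cases g' with
    | inl a' => simp [genData] at h
    | inr b' => exact congrArg Sum.inr (Subsingleton.elim _ _)

section UniqueLift

open CategoryTheory CategoryTheory.ActionCategory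

variable {X : Type} [Group X] (f : ∀ (x y : HGpd N), GenHom N x y → X)
variable (hfree : ∀ (a : A) (v : HNNExtension A C C' φ ⧸ N),
    HNNExtension.of (φ := φ) a • v = v → a = 1)

include hfree in
lemma sfun_rep (v : HNNExtension A C C' φ ⧸ N)
    (h : orbRep N (HNNExtension.of (φ := φ)) v = v) : sfun N f v = 1 :=
  dif_pos (orbSel_eq_one_of_rep N _ hfree v h)

lemma alphaFun_one (v : HNNExtension A C C' φ ⧸ N) : alphaFun N f 1 v = 1 := by
  simp [alphaFun]

include hfree in
lemma uncurry_genOf : ∀ (x y : HGpd N) (g : GenHom N x y),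
    (uncurry (Fhom N f hfree) (Fhom_sane N f hfree)).map (genOf N g) = f x y g := by
  intro x y g
  rcases g with ⟨a, ha1, ha2, ha3⟩ | ⟨hC1, hC2⟩
  · show (Fhom N f hfree (HNNExtension.of a)).left y.back = _
    rw [Fhom_of]
    show alphaFun N f a y.back = _
    have hxb : orbRep N (HNNExtension.of (φ := φ)) y.back = x.back := by
      rw [← ha2, orbRep_smul, ha1]
    have hsel : orbSel N (HNNExtension.of (φ := φ)) y.back = a :=
      (orbSel_unique N _ hfree a y.back (by rw [hxb, ha2])).symm
    have hinv : (HNNExtension.of (φ := φ) a)⁻¹ • y.back = x.back := by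
      rw [← ha2, inv_smul_smul]
    rw [alphaFun, hinv, sfun_rep N f hfree x.back ha1, inv_one, mul_one, sfun,
      dif_neg (by rw [hsel]; exact ha3)]
    refine label_congr N f ?_ ?_ _ _ ?_
    · exact obj_ext N (by rw [ActionCategory.coe_back, hxb])
    · exact obj_ext N (by rw [ActionCategory.coe_back])
    · simp only [genData, Sum.map_inl, Function.comp, hsel]
  · show (Fhom N f hfree HNNExtension.t).left y.back = _
    rw [Fhom_t]
    show taufun N f y.back = _
    have hu : (HNNExtension.t : HNNExtension A C C' φ)⁻¹ • y.back = x.back := by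
      rw [← hC2, inv_smul_smul]
    have hsel1 : orbSel N (iotaC (φ := φ)) x.back = 1 :=
      orbSel_eq_one_of_rep N _ (hfreeC N hfree) x.back hC1
    rw [taufun, hu, hsel1]
    conv_lhs => rw [hC1]
    simp only [map_one, OneMemClass.coe_one, alphaFun_one, one_mul, inv_one, mul_one]
    rw [gfun, dif_pos hC1]
    refine label_congr N f ?_ ?_ _ _ ?_
    · exact obj_ext N (by rw [ActionCategory.coe_back])
    · exact obj_ext N (by rw [ActionCategory.coe_back, hC2])
    · rfl

lemma W_mul_left
    (x y : ((HNNExtension A C C' φ ⧸ N) → X) ⋊[mulAutArrow] HNNExtension A C C' φ)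
    (v : HNNExtension A C C' φ ⧸ N) :
    (x * y).left v = x.left v * y.left (x.right⁻¹ • v) := by
  rw [SemidirectProduct.mul_left]; rfl

lemma W_inv_left
    (x : ((HNNExtension A C C' φ ⧸ N) → X) ⋊[mulAutArrow] HNNExtension A C C' φ)
    (v : HNNExtension A C C' φ ⧸ N) :
    (x⁻¹).left v = (x.left (x.right • v))⁻¹ := by
  rw [SemidirectProduct.inv_left]
  show (x.left⁻¹) ((x.right⁻¹)⁻¹ • v) = _
  rw [Pi.inv_apply, inv_inv]

include hfree in
lemma curry_eq (E : HGpd N ⥤ CategoryTheory.SingleObj X)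
    (hE : ∀ (x y : HGpd N) (g : GenHom N x y), E.map (genOf N g) = f x y g) :
    curry E = Fhom N f hfree := by
  have kl : ∀ (g : HNNExtension A C C' φ) v,
      (curry E g).left v = E.map (homOfPair v g) := fun g v => rfl
  have ES : ∀ v, E.map (homOfPair v
      (HNNExtension.of (φ := φ) (orbSel N (HNNExtension.of (φ := φ)) v))) = sfun N f v := by
    intro v
    by_cases h : orbSel N (HNNExtension.of (φ := φ)) v = 1
    · rw [sfun, dif_pos h]
      calc E.map (homOfPair v (HNNExtension.of (φ := φ)
            (orbSel N (HNNExtension.of (φ := φ)) v)))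
          = (curry E (HNNExtension.of (φ := φ)
            (orbSel N (HNNExtension.of (φ := φ)) v))).left v := (kl _ _).symm
        _ = (curry E (HNNExtension.of (φ := φ) (1 : A))).left v := by rw [h]
        _ = 1 := by rw [map_one, map_one]; rfl
    · have h3 := hE (↑(orbRep N (HNNExtension.of (φ := φ)) v)) (↑v)
        (Sum.inl ⟨orbSel N (HNNExtension.of (φ := φ)) v,
          by exact orbRep_idem _ _ _, by exact orbSel_spec _ _ _, h⟩)
      rw [sfun, dif_neg h, ← h3]
      refine Emap_congr N E ?_ rfl _ _ ?_
      · refine obj_ext N ?_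
        show (HNNExtension.of (φ := φ) (orbSel N (HNNExtension.of (φ := φ)) v))⁻¹ • v =
          ActionCategory.back _
        rw [inv_smul_eq_iff, ActionCategory.coe_back]
        exact (orbSel_spec N _ v).symm
      · rfl
  have hA : ∀ (a : A) v, (curry E (HNNExtension.of a)).left v = alphaFun N f a v := by
    intro a v
    have hav : HNNExtension.of (φ := φ) a • ((HNNExtension.of (φ := φ) a)⁻¹ • v) = v :=
      smul_inv_smul _ v
    have ha : a = orbSel N (HNNExtension.of (φ := φ)) v *
        (orbSel N (HNNExtension.of (φ := φ)) ((HNNExtension.of (φ := φ) a)⁻¹ • v))⁻¹ := by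
      have h2 := orbSel_smul N (HNNExtension.of (φ := φ)) hfree a
        ((HNNExtension.of (φ := φ) a)⁻¹ • v)
      rw [hav] at h2
      rw [h2]
      group
    have key : curry E (HNNExtension.of a) =
        curry E (HNNExtension.of (orbSel N (HNNExtension.of (φ := φ)) v)) *
        (curry E (HNNExtension.of (orbSel N (HNNExtension.of (φ := φ))
          ((HNNExtension.of (φ := φ) a)⁻¹ • v))))⁻¹ := by
      rw [← map_inv, ← map_inv, ← map_mul, ← map_mul, ← ha]
    rw [key, W_mul_left N, W_inv_left N]
    have hrv : (HNNExtension.of (φ := φ) (orbSel N (HNNExtension.of (φ := φ)) v))⁻¹ • v =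
        orbRep N (HNNExtension.of (φ := φ)) v := by
      rw [inv_smul_eq_iff]; exact (orbSel_spec N _ v).symm
    have hrv2 : HNNExtension.of (φ := φ) (orbSel N (HNNExtension.of (φ := φ))
        ((HNNExtension.of (φ := φ) a)⁻¹ • v)) • orbRep N (HNNExtension.of (φ := φ)) v =
        (HNNExtension.of (φ := φ) a)⁻¹ • v := by
      have : orbRep N (HNNExtension.of (φ := φ)) v =
          orbRep N (HNNExtension.of (φ := φ)) ((HNNExtension.of (φ := φ) a)⁻¹ • v) := by
        conv_lhs => rw [← hav]
        rw [orbRep_smul]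
      rw [this]
      exact orbSel_spec N _ _
    have hr1 : (curry E (HNNExtension.of (orbSel N (HNNExtension.of (φ := φ)) v))).right =
        HNNExtension.of (orbSel N (HNNExtension.of (φ := φ)) v) := rfl
    have hr2 : (curry E (HNNExtension.of (orbSel N (HNNExtension.of (φ := φ))
        ((HNNExtension.of (φ := φ) a)⁻¹ • v)))).right =
        HNNExtension.of (orbSel N (HNNExtension.of (φ := φ))
          ((HNNExtension.of (φ := φ) a)⁻¹ • v)) := rfl
    rw [hr1, hr2, hrv, hrv2, kl, kl, ES, ES, alphaFun]
  apply HNNExtension.hom_ext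
  · refine MonoidHom.ext fun a => ?_
    show curry E (HNNExtension.of a) = Fhom N f hfree (HNNExtension.of a)
    rw [Fhom_of]
    ext v
    · exact hA a v
    · rfl
  · show curry E HNNExtension.t = Fhom N f hfree HNNExtension.t
    rw [Fhom_t]
    ext v
    swap
    · rfl
    show (curry E HNNExtension.t).left v = taufun N f v
    set t' : HNNExtension A C C' φ := HNNExtension.t with ht'
    set u := t'⁻¹ • v with hu
    set c₁ := orbSel N (iotaC (φ := φ)) u with hc₁
    set w := orbRep N (iotaC (φ := φ)) u with hw
    have hw1 : iotaC (φ := φ) c₁ • w = u := orbSel_spec N _ u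
    have tid : t' = HNNExtension.of (φ := φ) ((φ c₁ : C') : A) *
        (t' * (HNNExtension.of (φ := φ) ((c₁ : C) : A))⁻¹) := by
      rw [ht', ← mul_assoc, ← HNNExtension.t_mul_of c₁]
      group
    have key : curry E t' = curry E (HNNExtension.of ((φ c₁ : C') : A)) *
        (curry E t' * (curry E (HNNExtension.of ((c₁ : C) : A)))⁻¹) := by
      conv_lhs => rw [tid]
      rw [map_mul, map_mul, map_inv]
    have hz : (HNNExtension.of (φ := φ) ((φ c₁ : C') : A))⁻¹ • v = t' • w := by
      rw [inv_smul_eq_iff]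
      have hv : v = t' • u := by rw [hu, smul_inv_smul]
      rw [hv, ← hw1, iotaC_apply, ← mul_smul, ← mul_smul, ← HNNExtension.t_mul_of c₁]
    have hr1 : (curry E (HNNExtension.of ((φ c₁ : C') : A))).right =
        HNNExtension.of ((φ c₁ : C') : A) := rfl
    have hr2 : (curry E (HNNExtension.of ((c₁ : C) : A))).right =
        HNNExtension.of ((c₁ : C) : A) := rfl
    have hr3 : (curry E t').right = t' := rfl
    rw [key, W_mul_left N, W_mul_left N, W_inv_left N, hr1, hr2, hr3, hz]
    have hzz : t'⁻¹ • (t' • w) = w := inv_smul_smul _ _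
    rw [hzz]
    have hcw : HNNExtension.of (φ := φ) ((c₁ : C) : A) • w = u := by
      rw [← iotaC_apply, hw1]
    have hgw : E.map (homOfPair (t' • w) t') = gfun N f w := by
      have hrep : orbRep N (iotaC (φ := φ)) w = w := orbRep_idem N _ u
      have h3 := hE (↑w) (↑((HNNExtension.t : HNNExtension A C C' φ) • w))
        (Sum.inr ⟨⟨by exact hrep, by exact rfl⟩⟩)
      rw [gfun, dif_pos hrep, ← h3]
      refine Emap_congr N E ?_ ?_ _ _ ?_
      · exact obj_ext N (by rw [ActionCategory.coe_back]; exact inv_smul_smul _ _)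
      · exact obj_ext N rfl
      · rfl
    rw [hcw, hA, hA, kl, hgw, taufun]
    rw [← ht', ← hu, ← hc₁, ← hw]
    group

end UniqueLift

/-- The action groupoid of an HNN extension of `A` on cosets of a subgroup meeting
all conjugates of `A` trivially is a free groupoid. -/
noncomputable def hgpdFree
    (hfree : ∀ (a : A) (v : HNNExtension A C C' φ ⧸ N),
      HNNExtension.of (φ := φ) a • v = v → a = 1) :
    IsFreeGroupoid (HGpd N) where
  quiverGenerators := ⟨fun x y => GenHom N x y⟩
  of := fun {x y} g => genOf N g
  unique_lift := by
    intro X _ fl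
    let f : ∀ (x y : HGpd N), GenHom N x y → X := fun x y g => fl g
    refine ⟨CategoryTheory.ActionCategory.uncurry (Fhom N f hfree) (Fhom_sane N f hfree),
      fun a b g => uncurry_genOf N f hfree a b g, ?_⟩
    intro E hE
    have hc : CategoryTheory.ActionCategory.curry E = Fhom N f hfree :=
      curry_eq N f hfree E (fun x y g => hE x y g)
    apply CategoryTheory.Functor.hext
    · intro x
      exact Subsingleton.elim _ _
    · refine CategoryTheory.ActionCategory.cases ?_
      intro t g
      apply heq_of_eq
      show E.map (homOfPair t g) = (Fhom N f hfree g).left t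
      rw [← hc]
      rfl

end HNNGroupoid

theorem hnnExtension_of_finite_virtuallyFree
    {A : Type} [Group A] [Finite A] (C C' : Subgroup A) (φ : C ≃* C') :
    ∃ H : Subgroup (HNNExtension A C C' φ), H.FiniteIndex ∧ IsFreeGroup H := by
  classical
  obtain ⟨σ, hσ⟩ := exists_perm C C' φ
  let Φ : HNNExtension A C C' φ →* Equiv.Perm A :=
    HNNExtension.lift (MulAction.toPermHom A A) σ (fun c => Equiv.ext fun x => by
      simpa [Equiv.Perm.mul_apply, MulAction.toPermHom_apply, smul_eq_mul] using hσ c x)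
  have hΦ_of : ∀ a : A, Φ (HNNExtension.of a) = MulAction.toPermHom A A a :=
    fun a => HNNExtension.lift_of _ _ _ a
  have hfree : ∀ (a : A) (v : HNNExtension A C C' φ ⧸ Φ.ker),
      HNNExtension.of (φ := φ) a • v = v → a = 1 := by
    intro a v hv
    obtain ⟨x, rfl⟩ := QuotientGroup.mk_surjective v
    rw [MulAction.Quotient.smul_mk] at hv
    have hker := QuotientGroup.eq.mp hv
    rw [MonoidHom.mem_ker] at hker
    have h1 : Φ (HNNExtension.of a) = 1 := by
      have h2 : (Φ x)⁻¹ * ((Φ (HNNExtension.of (φ := φ) a))⁻¹ * Φ x) = 1 := by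
        simpa [smul_eq_mul, map_mul, map_inv, mul_inv_rev, mul_assoc] using hker
      rw [inv_mul_eq_one] at h2
      exact inv_eq_one.mp (right_eq_mul.mp h2).symm.symm
    rw [hΦ_of] at h1
    have h4 : a * 1 = 1 := by
      have := congrFun (congrArg (fun (p : Equiv.Perm A) => (p : A → A)) h1) 1
      simpa [MulAction.toPermHom_apply, smul_eq_mul] using this
    simpa using h4
  haveI : Finite Φ.range := Subtype.finite
  refine ⟨Φ.ker, inferInstance, ?_⟩
  letI : IsFreeGroupoid (HGpd Φ.ker) := hgpdFree Φ.ker hfree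
  haveI : Nonempty (HNNExtension A C C' φ ⧸ Φ.ker) := ⟨QuotientGroup.mk 1⟩
  letI : Group (End (objEquiv (HNNExtension A C C' φ) (HNNExtension A C C' φ ⧸ Φ.ker)
      ↑(1 : HNNExtension A C C' φ))) := CategoryTheory.End.group (C := HGpd Φ.ker) _
  haveI : IsFreeGroup (End (objEquiv (HNNExtension A C C' φ) (HNNExtension A C C' φ ⧸ Φ.ker)
      ↑(1 : HNNExtension A C C' φ))) :=
    @IsFreeGroupoid.endIsFreeOfConnectedFree (HGpd Φ.ker) _
      (by exact instIsConnectedOfIsPretransitiveOfNonempty) _ _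
  exact IsFreeGroup.ofMulEquiv (CategoryTheory.ActionCategory.endMulEquivSubgroup Φ.ker)
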